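/- Let G be a finite metabelian group with maximal abelian normal subgroup K containing G', let ρ and ρ' be two faithful irreducible representations of G over an algebraically closed field of characteristic 0, induced from linear characters λ, λ' of K respectively. Then ker(λ) and ker(λ') are core-free in G, and consequently F(λ) = F(λ') = F(ζ_{exp(K)}) for any characteristic-0 field F. -/

import Mathlib

lemma aux_corefree {k : Type} [Field k] {G : Type} [Group G] {V : Type}
    [AddCommGroup V] [Module k V]
    (ρ : Representation k G V) (hfaith : Function.Injective ρ)
    (hirr : IsSimpleModule (MonoidAlgebra k G) ρ.asModule)
    (K : Subgroup G) (lam : K →* kˣ)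
    (W : Submodule k V) (hWne : W ≠ ⊥)
    (hWact : ∀ x : K, ∀ w ∈ W, ρ (x : G) w = (lam x : k) • w) :
    ∀ N : Subgroup G, N.Normal → N ≤ Subgroup.map K.subtype lam.ker → N = ⊥ := by
  haveI := hirr
  set U : Submodule k V := ⨆ g : G, W.map (ρ g) with hU
  have hWU : W ≤ U := by
    have h1 : W.map (ρ 1) ≤ U := le_iSup (fun g => W.map (ρ g)) 1
    simpa [Module.End.one_eq_id, Submodule.map_id] using h1
  have hUinv : ∀ (g : G) (v : V), v ∈ U → ρ g v ∈ U := by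
    intro g v hv
    have hmap : U.map (ρ g) ≤ U := by
      rw [hU, Submodule.map_iSup]
      apply iSup_le
      intro g'
      rw [← Submodule.map_comp]
      have hc : (ρ g) ∘ₗ (ρ g') = ρ (g * g') := by
        ext v; simp [map_mul]
      rw [hc]
      exact le_iSup (fun g => W.map (ρ g)) (g * g')
    exact hmap ⟨v, hv, rfl⟩
  have hsmul : ∀ (r : MonoidAlgebra k G) (v : V), v ∈ U → ρ.asAlgebraHom r v ∈ U := by
    intro r v hv
    induction r using MonoidAlgebra.induction_on with
    | of g =>
      rw [Representation.asAlgebraHom_of]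
      exact hUinv g v hv
    | add f f' hf hf' =>
      rw [map_add, LinearMap.add_apply]
      exact U.add_mem hf hf'
    | smul c f hf =>
      rw [map_smul, LinearMap.smul_apply]
      exact U.smul_mem c hf
  let P : Submodule (MonoidAlgebra k G) ρ.asModule :=
    { carrier := U.carrier
      add_mem' := fun h h' => U.add_mem h h'
      zero_mem' := U.zero_mem
      smul_mem' := fun r v hv => by
        show ρ.asModuleEquiv (r • v) ∈ U
        rw [Representation.asModuleEquiv_map_smul]
        exact hsmul r (ρ.asModuleEquiv v) hv }
  obtain ⟨w, hwW, hw0⟩ := Submodule.exists_mem_ne_zero_of_ne_bot hWne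
  have hPne : P ≠ ⊥ := by
    intro h
    have hwP : (w : ρ.asModule) ∈ P := hWU hwW
    rw [h] at hwP
    exact hw0 ((Submodule.mem_bot (M := ρ.asModule) _).mp hwP)
  have hPtop : P = ⊤ := (eq_bot_or_eq_top P).resolve_left hPne
  have hUtop : ∀ v : V, v ∈ U := by
    intro v
    have h2 : ∀ y : ρ.asModule, y ∈ P := fun y => hPtop ▸ Submodule.mem_top
    exact h2 v
  intro N hNn hNle
  rw [eq_bot_iff]
  intro n hn
  have hρn : ρ n = 1 := by
    have hloc : U ≤ LinearMap.eqLocus (ρ n) 1 := by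
      apply iSup_le
      rintro g _ ⟨w', hw'W, rfl⟩
      show ρ n (ρ g w') = (1 : V →ₗ[k] V) (ρ g w')
      have hmem : g⁻¹ * n * g ∈ N := by
        have := hNn.conj_mem n hn g⁻¹
        simpa using this
      obtain ⟨x, hxker, hxval⟩ := hNle hmem
      have h1 : ρ n (ρ g w') = ρ g (ρ (g⁻¹ * n * g) w') := by
        rw [← Module.End.mul_apply, ← map_mul, ← Module.End.mul_apply, ← map_mul]
        congr 1
        group
      have h2 : ρ (g⁻¹ * n * g) w' = w' := by
        rw [← hxval]
        have h3 : ρ (K.subtype x) w' = (lam x : k) • w' := hWact x w' hw'W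
        have hx1 : lam x = 1 := hxker
        rw [h3, hx1]
        simp
      rw [h1, h2]
      simp
    ext v
    exact hloc (hUtop v)
  have : n = 1 := hfaith (by rw [hρn, map_one])
  simpa [Subgroup.mem_bot] using this


lemma aux_adjoin (F : Type) [Field F] {G : Type} [Group G] [Finite G]
    (K : Subgroup G) (hKn : K.Normal) (lam : K →* (AlgebraicClosure F)ˣ)
    (hcore : ∀ N : Subgroup G, N.Normal → N ≤ Subgroup.map K.subtype lam.ker → N = ⊥)
    (ζ : AlgebraicClosure F) (hζ : IsPrimitiveRoot ζ (Monoid.exponent K)) :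
    IntermediateField.adjoin F (Set.range fun x : K => (lam x : AlgebraicClosure F)) =
      IntermediateField.adjoin F {ζ} := by
  set n := Monoid.exponent K with hn
  have hn0 : n ≠ 0 := Monoid.exponent_ne_zero_of_finite
  haveI : Finite ↥lam.range := Set.Finite.to_subtype (Set.finite_range lam)
  set m := Monoid.exponent ↥lam.range with hm
  have hvalpow : ∀ x : K, (lam x) ^ m = 1 := by
    intro x
    have h1 : (⟨lam x, ⟨x, rfl⟩⟩ : lam.range) ^ m = 1 := Monoid.pow_exponent_eq_one _
    have := congrArg Subtype.val h1
    simpa using this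
  set S : Set G := (fun g => g ^ m) '' (K : Set G) with hS
  have hKpowN : (Subgroup.closure S).Normal := by
    constructor
    intro a ha g
    induction ha using Subgroup.closure_induction with
    | mem x hx =>
      obtain ⟨b, hb, rfl⟩ := hx
      have h1 : g * b ^ m * g⁻¹ = (g * b * g⁻¹) ^ m := conj_pow.symm
      rw [h1]
      exact Subgroup.subset_closure ⟨g * b * g⁻¹, hKn.conj_mem b hb g, rfl⟩
    | one => simpa using (Subgroup.closure S).one_mem
    | mul x y hx hy ihx ihy =>
      have h1 : g * (x * y) * g⁻¹ = (g * x * g⁻¹) * (g * y * g⁻¹) := by group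
      rw [h1]; exact mul_mem ihx ihy
    | inv x hx ihx =>
      have h1 : g * x⁻¹ * g⁻¹ = (g * x * g⁻¹)⁻¹ := by group
      rw [h1]; exact inv_mem ihx
  have hle : Subgroup.closure S ≤ Subgroup.map K.subtype lam.ker := by
    rw [Subgroup.closure_le]
    rintro _ ⟨b, hb, rfl⟩
    refine ⟨⟨b, hb⟩ ^ m, ?_, by simp⟩
    show lam (⟨b, hb⟩ ^ m) = 1
    rw [map_pow]
    exact hvalpow ⟨b, hb⟩
  have hKpow_bot := hcore _ hKpowN hle
  have hpow_eq_one : ∀ x : K, x ^ m = 1 := by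
    intro x
    have h1 : (x : G) ^ m ∈ Subgroup.closure S := Subgroup.subset_closure ⟨x, x.2, rfl⟩
    rw [hKpow_bot, Subgroup.mem_bot] at h1
    ext
    simpa using h1
  have hnm : n ∣ m := Monoid.exponent_dvd_of_forall_pow_eq_one hpow_eq_one
  have hmn : m ∣ n := by
    apply Monoid.exponent_dvd_of_forall_pow_eq_one
    rintro ⟨u, y, rfl⟩
    have h1 : (lam y) ^ n = 1 := by
      rw [← map_pow, Monoid.pow_exponent_eq_one, map_one]
    exact Subtype.ext (by simpa using h1)
  have hmn' : m = n := Nat.dvd_antisymm hmn hnm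
  obtain ⟨x, hx⟩ := Monoid.exists_orderOf_eq_exponent
    (Monoid.ExponentExists.of_finite (G := ↥lam.range))
  obtain ⟨k0, hk0⟩ := x.2
  set ζ0 : AlgebraicClosure F := ((x : (AlgebraicClosure F)ˣ) : AlgebraicClosure F) with hζ0
  have horder : orderOf ζ0 = n := by
    have h2 := orderOf_injective lam.range.subtype (Subgroup.subtype_injective _) x
    rw [hζ0, orderOf_units, show ((x : (AlgebraicClosure F)ˣ)) = lam.range.subtype x from rfl,
      h2, hx, ← hm, hmn']
  have hprim0 : IsPrimitiveRoot ζ0 n := horder ▸ IsPrimitiveRoot.orderOf ζ0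
  haveI : NeZero n := ⟨hn0⟩
  apply le_antisymm
  · rw [IntermediateField.adjoin_le_iff]
    rintro _ ⟨y, rfl⟩
    have hyn : ((lam y : (AlgebraicClosure F)ˣ) : AlgebraicClosure F) ^ n = 1 := by
      rw [← Units.val_pow_eq_pow_val, ← map_pow, Monoid.pow_exponent_eq_one, map_one,
        Units.val_one]
    obtain ⟨i, _, hi⟩ := hζ.eq_pow_of_pow_eq_one hyn
    have hmem : ((lam y : (AlgebraicClosure F)ˣ) : AlgebraicClosure F) ∈
        IntermediateField.adjoin F {ζ} := by
      rw [← hi]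
      exact pow_mem (IntermediateField.mem_adjoin_simple_self F ζ) i
    exact hmem
  · rw [IntermediateField.adjoin_le_iff, Set.singleton_subset_iff]
    have hζ0mem : ζ0 ∈ IntermediateField.adjoin F
        (Set.range fun x : K => (lam x : AlgebraicClosure F)) := by
      apply IntermediateField.subset_adjoin
      refine ⟨k0, ?_⟩
      show ((lam k0 : (AlgebraicClosure F)ˣ) : AlgebraicClosure F) = ζ0
      rw [hk0, hζ0]
    obtain ⟨i, _, hi⟩ := hprim0.eq_pow_of_pow_eq_one hζ.pow_eq_one
    rw [← hi]
    exact pow_mem hζ0mem i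

/-- Let `G` be a finite metabelian group with maximal abelian normal subgroup `K`
containing `G'`, and let `ρ`, `ρ'` be two faithful irreducible representations of `G`
over the algebraic closure of a characteristic-0 field `F`, induced from linear
characters `lam`, `lam'` of `K` respectively (induction encoded by the existence of a
`K`-stable line on which `K` acts via the character, with `dim = [G : K]`). Then
`ker lam` and `ker lam'` are core-free in `G`, and `F(lam) = F(lam') = F(ζ_{exp K})`. -/
theorem stmt_14 (G : Type) [Group G] [Finite G]
    (hmeta : ∀ a b : commutator G, a * b = b * a)
    (K : Subgroup G) (hKn : K.Normal)
    (hKab : ∀ a b : G, a ∈ K → b ∈ K → a * b = b * a)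
    (hGK : commutator G ≤ K)
    (hmax : ∀ K' : Subgroup G, K'.Normal →
      (∀ a b : G, a ∈ K' → b ∈ K' → a * b = b * a) → K ≤ K' → K' = K)
    (F : Type) [Field F] [CharZero F]
    (V V' : Type)
    [AddCommGroup V] [Module (AlgebraicClosure F) V]
    [FiniteDimensional (AlgebraicClosure F) V]
    [AddCommGroup V'] [Module (AlgebraicClosure F) V']
    [FiniteDimensional (AlgebraicClosure F) V']
    (ρ : Representation (AlgebraicClosure F) G V) (hfaith : Function.Injective ρ)
    (hirr : IsSimpleModule (MonoidAlgebra (AlgebraicClosure F) G) ρ.asModule)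
    (ρ' : Representation (AlgebraicClosure F) G V') (hfaith' : Function.Injective ρ')
    (hirr' : IsSimpleModule (MonoidAlgebra (AlgebraicClosure F) G) ρ'.asModule)
    (lam : K →* (AlgebraicClosure F)ˣ) (lam' : K →* (AlgebraicClosure F)ˣ)
    -- `ρ ≅ Ind_K^G lam`:
    (W : Submodule (AlgebraicClosure F) V)
    (hW1 : Module.finrank (AlgebraicClosure F) W = 1)
    (hWact : ∀ k : K, ∀ w ∈ W, ρ (k : G) w = (lam k : AlgebraicClosure F) • w)
    (hind : Module.finrank (AlgebraicClosure F) V = K.index)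
    -- `ρ' ≅ Ind_K^G lam'`:
    (W' : Submodule (AlgebraicClosure F) V')
    (hW1' : Module.finrank (AlgebraicClosure F) W' = 1)
    (hWact' : ∀ k : K, ∀ w ∈ W', ρ' (k : G) w = (lam' k : AlgebraicClosure F) • w)
    (hind' : Module.finrank (AlgebraicClosure F) V' = K.index) :
    (∀ N : Subgroup G, N.Normal → N ≤ Subgroup.map K.subtype lam.ker → N = ⊥) ∧
    (∀ N : Subgroup G, N.Normal → N ≤ Subgroup.map K.subtype lam'.ker → N = ⊥) ∧
    (∀ ζ : AlgebraicClosure F, IsPrimitiveRoot ζ (Monoid.exponent K) →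
      IntermediateField.adjoin F (Set.range fun k : K => (lam k : AlgebraicClosure F)) =
          IntermediateField.adjoin F {ζ} ∧
      IntermediateField.adjoin F (Set.range fun k : K => (lam' k : AlgebraicClosure F)) =
          IntermediateField.adjoin F {ζ}) := by
  have hWne : W ≠ ⊥ := by
    intro h
    rw [h] at hW1
    simp at hW1
  have hWne' : W' ≠ ⊥ := by
    intro h
    rw [h] at hW1'
    simp at hW1'
  have hcore1 := aux_corefree ρ hfaith hirr K lam W hWne hWact
  have hcore2 := aux_corefree ρ' hfaith' hirr' K lam' W' hWne' hWact'
  refine ⟨hcore1, hcore2, fun ζ hζ => ⟨?_, ?_⟩⟩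
  · exact aux_adjoin F K hKn lam hcore1 ζ hζ
  · exact aux_adjoin F K hKn lam' hcore2 ζ hζ
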